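/- Let B be a nontrivial virtually cyclic group and φ ∈ Aut(B). Then the action of Z via φ on the set of conjugacy classes of nontrivial elements of B is not free; i.e., there exist a nontrivial y ∈ B and a nonzero integer r such that φ^r(y) is conjugate in B to y. -/

import Mathlib

open Subgroup

theorem relindex_zpowers_zpow {B : Type*} [Group B] (x : B) (hx : ¬ IsOfFinOrder x) (j : ℤ) :
    (zpowers (x ^ j)).relIndex (zpowers x) = j.natAbs := by
  have hinj : Function.Injective fun n : ℤ => x ^ n :=
    injective_zpow_iff_not_isOfFinOrder.mpr hx
  have hf : (zpowersHom B x).range = zpowers x := by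
    ext b; simp [MonoidHom.mem_range, mem_zpowers_iff]
  have hcomap : (zpowers (x ^ j)).comap (zpowersHom B x)
      = AddSubgroup.toSubgroup (AddSubgroup.zmultiples j) := by
    ext a
    simp only [mem_comap, zpowersHom_apply, mem_zpowers_iff]
    constructor
    · rintro ⟨c, hc⟩
      rw [← zpow_mul] at hc
      have := hinj hc
      show Multiplicative.toAdd a ∈ AddSubgroup.zmultiples j
      exact ⟨c, by simpa [mul_comm] using this⟩
    · rintro hc
      obtain ⟨c, hc⟩ := (show Multiplicative.toAdd a ∈ AddSubgroup.zmultiples j from hc)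
      exact ⟨c, by rw [← zpow_mul]; congr 1; simpa [mul_comm] using hc⟩
  have := Subgroup.index_comap (zpowers (x ^ j)) (zpowersHom B x)
  rw [hf, hcomap] at this
  rw [← this, AddSubgroup.index_toSubgroup, Int.index_zmultiples]

theorem index_zpowers_zpow {B : Type*} [Group B] (x : B) (hx : ¬ IsOfFinOrder x) (j : ℤ) :
    (zpowers (x ^ j)).index = j.natAbs * (zpowers x).index := by
  rw [← relindex_zpowers_zpow x hx j]
  exact (relIndex_mul_index (zpowers_le.mpr (mem_zpowers_iff.mpr ⟨j, rfl⟩))).symm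

/-- If `B` is a nontrivial virtually cyclic group and `φ` an automorphism of
`B`, then the `ℤ`-action via `φ` on conjugacy classes of nontrivial elements of
`B` is not free: some nontrivial `y` and nonzero `r` have `φ^r(y)` conjugate to
`y`. -/
theorem stmt9 (B : Type*) [Group B] [Nontrivial B]
    (hvc : ∃ K : Subgroup B, IsCyclic K ∧ K.index ≠ 0) (φ : MulAut B) :
    ∃ y : B, y ≠ 1 ∧ ∃ r : ℤ, r ≠ 0 ∧ IsConj ((φ ^ r) y) y := by
  obtain ⟨K, hK, hKi⟩ := hvc
  obtain ⟨g, hg⟩ := hK.exists_generator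
  by_cases hfin : IsOfFinOrder (g : B)
  · -- finite case : B is finite
    have hKfin : Finite K := by
      have h1 : ((zpowers (g : B)) : Set B).Finite := hfin.finite_zpowers
      have hsub : (K : Set B) ⊆ ((zpowers (g : B)) : Set B) := by
        intro b hb
        obtain ⟨j, hj⟩ := hg ⟨b, hb⟩
        exact ⟨j, by have := congrArg Subtype.val hj; simpa using this⟩
      exact (h1.subset hsub).to_subtype
    have hB : Finite B := by
      have hcard := Subgroup.card_mul_index K
      have h0 : Nat.card K ≠ 0 := Nat.card_pos.ne'
      refine Nat.finite_of_card_ne_zero ?_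
      rw [← hcard]
      exact mul_ne_zero h0 hKi
    have : Finite (MulAut B) := inferInstance
    obtain ⟨y, hy⟩ := exists_ne (1 : B)
    refine ⟨y, hy, (orderOf φ : ℤ), ?_, ?_⟩
    · exact_mod_cast (orderOf_pos φ).ne'
    · have h1 : φ ^ (orderOf φ : ℤ) = 1 := by rw [zpow_natCast, pow_orderOf_eq_one]
      rw [h1]
      exact IsConj.refl y
  · -- infinite case
    set x : B := (g : B) with hxdef
    have hinj : Function.Injective fun n : ℤ => x ^ n :=
      injective_zpow_iff_not_isOfFinOrder.mpr hfin
    have hzK : zpowers x = K := by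
      apply le_antisymm (zpowers_le.mpr g.2)
      intro b hb
      obtain ⟨j, hj⟩ := hg ⟨b, hb⟩
      exact ⟨j, by have := congrArg Subtype.val hj; simpa using this⟩
    have hIdx : (zpowers x).index ≠ 0 := by rw [hzK]; exact hKi
    obtain ⟨m, hm0, _, hmem⟩ := Subgroup.exists_pow_mem_of_index_ne_zero hIdx (φ x)
    obtain ⟨k, hk⟩ := hmem
    -- hk : x ^ k = (φ x) ^ m
    have hφxm : φ (x ^ (m : ℤ)) = x ^ k := by
      rw [map_zpow, zpow_natCast, ← hk]
    -- index comparison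
    have hmapeq : Subgroup.map φ.toMonoidHom (zpowers (x ^ (m : ℤ))) = zpowers (x ^ k) := by
      rw [MonoidHom.map_zpowers]
      exact congrArg _ hφxm
    have hidx_eq : (zpowers (x ^ k)).index = (zpowers (x ^ (m : ℤ))).index := by
      rw [← hmapeq]
      have hker : (MulEquiv.toMonoidHom φ).ker = ⊥ :=
        (MonoidHom.ker_eq_bot_iff _).mpr φ.injective
      exact Subgroup.index_map_eq _ φ.surjective (hker ▸ bot_le)
    rw [index_zpowers_zpow x hfin, index_zpowers_zpow x hfin] at hidx_eq
    have hkm : k.natAbs = m :=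
      Nat.eq_of_mul_eq_mul_right (Nat.pos_of_ne_zero hIdx)
        (by simpa using hidx_eq)
    have hy1 : x ^ (m : ℤ) ≠ 1 := by
      intro h
      have : (m : ℤ) = 0 := hinj (by simpa using h)
      omega
    rcases Int.natAbs_eq_iff.mp hkm with hkm' | hkm'
    · -- k = m : φ fixes x ^ m
      refine ⟨x ^ (m : ℤ), hy1, 1, one_ne_zero, ?_⟩
      have : (φ ^ (1 : ℤ)) (x ^ (m : ℤ)) = x ^ (m : ℤ) := by
        rw [zpow_one, hφxm, hkm']
      rw [this]
    · -- k = -m : φ² fixes x ^ m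
      refine ⟨x ^ (m : ℤ), hy1, 2, two_ne_zero, ?_⟩
      have h2 : (φ ^ (2 : ℤ)) (x ^ (m : ℤ)) = x ^ (m : ℤ) := by
        have : (φ ^ (2 : ℤ)) = φ * φ := by
          rw [show (2 : ℤ) = ((2 : ℕ) : ℤ) by norm_num, zpow_natCast, sq]
        rw [this, MulAut.mul_apply, hφxm, hkm']
        rw [show x ^ (-(m : ℤ)) = (x ^ (m : ℤ))⁻¹ by rw [zpow_neg], map_inv, hφxm, hkm',
          zpow_neg, inv_inv]
      rw [h2]
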